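/- If (μₙ), (αₙ), (βₙ), (γₙ) are sequences of nonnegative reals satisfying μ_{n+1} ≤ μₙ − αₙβₙ + γₙ for all n, with ∑αᵢ = ∞ and ∑γᵢ < ∞, then there exists a subsequence (β_{lₙ}) with β_{lₙ} → 0. -/

import Mathlib

open Filter Finset

/-- If (μₙ), (αₙ), (βₙ), (γₙ) are nonnegative real sequences with
μ_{n+1} ≤ μₙ − αₙβₙ + γₙ, ∑αᵢ = ∞ and ∑γᵢ < ∞, then some subsequence of (βₙ)
tends to 0: for every ε > 0 and every N there is n ≥ N with βₙ ≤ ε. -/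
theorem stmt0 (μ α β γ : ℕ → ℝ)
    (hμ : ∀ n, 0 ≤ μ n) (hα : ∀ n, 0 ≤ α n) (hβ : ∀ n, 0 ≤ β n) (hγ : ∀ n, 0 ≤ γ n)
    (hrec : ∀ n, μ (n + 1) ≤ μ n - α n * β n + γ n)
    (hdiv : Tendsto (fun n => ∑ i ∈ Finset.range n, α i) atTop atTop)
    (hsum : Summable γ) :
    ∀ ε : ℝ, 0 < ε → ∀ N : ℕ, ∃ n ≥ N, β n ≤ ε := by
  intro ε hε N
  by_contra h
  push_neg at h
  -- h : ∀ n ≥ N, ε < β n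
  set C : ℝ := ∑' i, γ i with hC
  have hγsum : ∀ m : ℕ, ∑ i ∈ Finset.range m, γ (N + i) ≤ C := by
    intro m
    have := hsum.sum_le_tsum ((Finset.range m).image (fun i => N + i))
      (fun i _ => hγ i)
    refine le_trans (le_of_eq ?_) this
    rw [Finset.sum_image]
    intro a _ b _ hab
    simp only at hab
    omega
  have key : ∀ m : ℕ, μ (N + m) + ε * ∑ i ∈ Finset.range m, α (N + i)
      ≤ μ N + ∑ i ∈ Finset.range m, γ (N + i) := by
    intro m
    induction m with
    | zero => simp
    | succ m ih =>
      rw [Finset.sum_range_succ, Finset.sum_range_succ]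
      have h1 := hrec (N + m)
      have h2 : ε * α (N + m) ≤ α (N + m) * β (N + m) := by
        rcases eq_or_lt_of_le (hα (N + m)) with h0 | h0
        · rw [← h0]; simp
        · have := h (N + m) (by omega)
          nlinarith
      have : μ (N + (m + 1)) = μ (N + m + 1) := by ring_nf
      rw [this]
      nlinarith
  -- so ε * partial sums of shifted α are bounded
  have hbound : ∀ m : ℕ, ε * ∑ i ∈ Finset.range m, α (N + i) ≤ μ N + C := by
    intro m
    have := key m
    have := hγsum m
    have := hμ (N + m)
    linarith
  -- partial sums of α over range (N+m) = range N part + shifted part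
  obtain ⟨k, hk, hkN⟩ := (((tendsto_atTop.mp hdiv)
    ((∑ i ∈ Finset.range N, α i) + (μ N + C) / ε + 1)).and
    (eventually_ge_atTop N)).exists
  have hsplit : ∑ i ∈ Finset.range k, α i
      = ∑ i ∈ Finset.range N, α i + ∑ i ∈ Finset.range (k - N), α (N + i) := by
    have he : N + (k - N) = k := by omega
    rw [← Finset.sum_range_add, he]
  have := hbound (k - N)
  have h2 : ∑ i ∈ Finset.range (k - N), α (N + i) ≤ (μ N + C) / ε := by
    rw [le_div_iff₀ hε]
    linarith [this]
  rw [hsplit] at hk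
  linarith
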